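/- Let d ≥ 1, N ∈ ℕ, κ ∈ ℝ^{d+1} with each κ_i > −1, and let β ∈ ℕ^{d+1} with |β| ≤ N. Then for every y ∈ ℝ^{d+1} with s := y_1+⋯+y_{d+1} ≠ 0, the monic Jacobi polynomial on the simplex is a generating function for the monic Hahn polynomials: s^N · R_β^κ(y_1/s, …, y_d/s) = ((−1)^{|β|}/(−N)_{|β|}) · Σ_{α ∈ Z_N^{d+1}} (N!/α!) · Q_β(α; κ, N) · y^α. -/

import Mathlib

open Finset

/-- Pochhammer symbol `(a)_k = a (a+1) ⋯ (a+k-1)`. -/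
noncomputable def poch (a : ℝ) : ℕ → ℝ
  | 0 => 1
  | k + 1 => poch a k * (a + k)

/-- Multi-index Pochhammer `(x)_γ = ∏ i (x i)_{γ i}`. -/
noncomputable def pochV {m : ℕ} (x : Fin m → ℝ) (γ : Fin m → ℕ) : ℝ :=
  ∏ i, poch (x i) (γ i)

/-- Multi-index factorial `γ! = ∏ i (γ i)!` (as a real number). -/
noncomputable def mfact {m : ℕ} (γ : Fin m → ℕ) : ℝ :=
  ∏ i, (Nat.factorial (γ i) : ℝ)

/-- Shifted monomial `m_γ(x) = (-1)^{|γ|} (-x)_γ`. -/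
noncomputable def mono {m : ℕ} (γ : Fin m → ℕ) (x : Fin m → ℝ) : ℝ :=
  (-1 : ℝ) ^ (∑ i, γ i) * pochV (fun i => -(x i)) γ

/-- `Z_N^{d+1} = {α ∈ ℕ^{d+1} : |α| = N}` as a finite set. -/
def ZN (d N : ℕ) : Finset (Fin (d + 1) → ℕ) :=
  (Fintype.piFinset fun _ => Finset.range (N + 1)).filter fun α => ∑ i, α i = N

/-- `{ν ∈ ℕ^d : |ν| = n}` as a finite set. -/
def idxSet (d n : ℕ) : Finset (Fin d → ℕ) :=
  (Fintype.piFinset fun _ => Finset.range (n + 1)).filter fun ν => ∑ i, ν i = n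

/-- The finite set `{γ ∈ ℕ^m : γ ≤ α}`. -/
def below {m : ℕ} (α : Fin m → ℕ) : Finset (Fin m → ℕ) :=
  Fintype.piFinset fun i => Finset.range (α i + 1)

/-- Monic Hahn polynomial `Q_α(x; κ, N)`. -/
noncomputable def monicQ (d N : ℕ) (κ : Fin (d + 1) → ℝ) (α : Fin (d + 1) → ℕ)
    (x : Fin (d + 1) → ℝ) : ℝ :=
  poch (-(N : ℝ)) (∑ i, α i) * pochV (fun i => κ i + 1) α /
      poch ((∑ i, κ i) + d + (∑ i, α i)) (∑ i, α i) *
    ∑ γ ∈ below α,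
      pochV (fun i => -(α i : ℝ)) γ * poch ((∑ i, κ i) + d + (∑ i, α i)) (∑ i, γ i) *
          (-1 : ℝ) ^ (∑ i, γ i) /
          (mfact γ * pochV (fun i => κ i + 1) γ * poch (-(N : ℝ)) (∑ i, γ i)) *
        mono γ x

/-- One-variable Hahn polynomial `Q_n(x; a, b, M)` (a `₃F₂` sum). -/
noncomputable def hahn1 (n : ℕ) (x a b M : ℝ) : ℝ :=
  ∑ k ∈ Finset.range (n + 1),
    poch (-(n : ℝ)) k * poch ((n : ℝ) + a + b + 1) k * poch (-x) k /
      (poch (a + 1) k * poch (-M) k * (Nat.factorial k : ℝ))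

/-- The parameter `a_j = κ_{j+1}+⋯+κ_{d+1} + 2|ν^{j+1}| + d - j` (1-based `j`). -/
noncomputable def aj (d : ℕ) (κ : Fin (d + 1) → ℝ) (ν : Fin d → ℕ) (j : Fin d) : ℝ :=
  (∑ i ∈ Finset.univ.filter (fun i : Fin (d + 1) => (j : ℕ) < (i : ℕ)), κ i) +
    2 * (∑ i ∈ Finset.univ.filter (fun i : Fin d => (j : ℕ) < (i : ℕ)), (ν i : ℝ)) +
    ((d - 1 - (j : ℕ) : ℕ) : ℝ)

/-- `|x_{j-1}| = x_1 + ⋯ + x_{j-1}` (1-based `j`). -/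
noncomputable def sumLt (d : ℕ) (x : Fin (d + 1) → ℕ) (j : Fin d) : ℝ :=
  ∑ i ∈ Finset.univ.filter (fun i : Fin (d + 1) => (i : ℕ) < (j : ℕ)), (x i : ℝ)

/-- `|ν^{j+1}| = ν_{j+1} + ⋯ + ν_d` (1-based `j`). -/
noncomputable def sumGt (d : ℕ) (ν : Fin d → ℕ) (j : Fin d) : ℝ :=
  ∑ i ∈ Finset.univ.filter (fun i : Fin d => (j : ℕ) < (i : ℕ)), (ν i : ℝ)

/-- Hahn polynomial of `d` variables `H_ν(x; κ, N)`. -/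
noncomputable def hahnH (d N : ℕ) (κ : Fin (d + 1) → ℝ) (ν : Fin d → ℕ)
    (x : Fin (d + 1) → ℕ) : ℝ :=
  (-1 : ℝ) ^ (∑ i, ν i) / poch (-(N : ℝ)) (∑ i, ν i) *
    ∏ j : Fin d,
      poch (κ j.castSucc + 1) (ν j) / poch (aj d κ ν j + 1) (ν j) *
        poch (-(N : ℝ) + sumLt d x j + sumGt d ν j) (ν j) *
        hahn1 (ν j) (x j.castSucc : ℝ) (κ j.castSucc) (aj d κ ν j)
          ((N : ℝ) - sumLt d x j - sumGt d ν j)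

/-- Squared norm `B_ν(κ, N)` of the Hahn polynomial `H_ν(·; κ, N)`. -/
noncomputable def Bnorm (d N : ℕ) (κ : Fin (d + 1) → ℝ) (ν : Fin d → ℕ) : ℝ :=
  (-1 : ℝ) ^ (∑ i, ν i) * poch ((∑ i, κ i) + d + 1) (N + ∑ i, ν i) /
      (poch (-(N : ℝ)) (∑ i, ν i) * poch ((∑ i, κ i) + d + 1) N *
        poch ((∑ i, κ i) + d + 1) (2 * ∑ i, ν i)) *
    ∏ j : Fin d,
      poch (κ j.castSucc + aj d κ ν j + 1) (2 * ν j) * poch (κ j.castSucc + 1) (ν j) *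
          (Nat.factorial (ν j) : ℝ) /
        (poch (κ j.castSucc + aj d κ ν j + 1) (ν j) * poch (aj d κ ν j + 1) (ν j))

/-- Projection `Q_{α,n}(x; κ, N)` of `m_α/(κ+1)_α` onto the space of degree `n`. -/
noncomputable def monicQn (d N : ℕ) (κ : Fin (d + 1) → ℝ) (α : Fin (d + 1) → ℕ) (n : ℕ)
    (x : Fin (d + 1) → ℝ) : ℝ :=
  (-1 : ℝ) ^ (∑ i, α i) * poch (-(N : ℝ)) (∑ i, α i) * poch ((∑ i, κ i) + d + 1) (2 * n) /
      (poch (-(N : ℝ)) n * poch ((∑ i, κ i) + d + 1) ((∑ i, α i) + n)) *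
    ∑ β ∈ ZN d n,
      pochV (fun i => -(α i : ℝ)) β / (mfact β * pochV (fun i => κ i + 1) β) *
        monicQ d N κ β x

/-- The kernel `E_k(x, y; κ) = Σ_{|γ|=k} (-x)_γ (-y)_γ / (γ! (κ+1)_γ)`. -/
noncomputable def Efun (d : ℕ) (κ : Fin (d + 1) → ℝ) (x y : Fin (d + 1) → ℕ) (k : ℕ) : ℝ :=
  ∑ γ ∈ ZN d k,
    pochV (fun i => -(x i : ℝ)) γ * pochV (fun i => -(y i : ℝ)) γ /
      (mfact γ * pochV (fun i => κ i + 1) γ)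

/-- Monic Jacobi polynomial on the simplex `R_α^κ(x)`. -/
noncomputable def jacobiR (d : ℕ) (κ : Fin (d + 1) → ℝ) (α : Fin (d + 1) → ℕ)
    (x : Fin d → ℝ) : ℝ :=
  (-1 : ℝ) ^ (∑ i, α i) * pochV (fun i => κ i + 1) α /
      poch ((∑ i, κ i) + d + (∑ i, α i)) (∑ i, α i) *
    ∑ γ ∈ below α,
      pochV (fun i => -(α i : ℝ)) γ * poch ((∑ i, κ i) + d + (∑ i, α i)) (∑ i, γ i) /
          (pochV (fun i => κ i + 1) γ * mfact γ) *
        ∏ i, (Fin.snoc x (1 - ∑ i, x i) : Fin (d + 1) → ℝ) i ^ γ i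

/-- One-variable Krawtchouk polynomial `K_n(x; p, M)`. -/
noncomputable def kraw1 (n : ℕ) (x p M : ℝ) : ℝ :=
  ∑ k ∈ Finset.range (n + 1),
    poch (-(n : ℝ)) k * poch (-x) k / (poch (-M) k * (Nat.factorial k : ℝ) * p ^ k)

/-- The extended parameter `𝛒 = (ρ_1, …, ρ_d, 1 - |ρ|)`. -/
noncomputable def brho (d : ℕ) (ρ : Fin d → ℝ) : Fin (d + 1) → ℝ :=
  Fin.snoc ρ (1 - ∑ i, ρ i)

/-- `𝛒^γ = ∏ i 𝛒_i^{γ i}`. -/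
noncomputable def bpow (d : ℕ) (ρ : Fin d → ℝ) (γ : Fin (d + 1) → ℕ) : ℝ :=
  ∏ i, brho d ρ i ^ γ i

/-- `|𝛒_j| = ρ_1 + ⋯ + ρ_j` (1-based `j`). -/
noncomputable def sumLe (d : ℕ) (ρ : Fin d → ℝ) (j : Fin d) : ℝ :=
  ∑ i ∈ Finset.univ.filter (fun i : Fin d => (i : ℕ) ≤ (j : ℕ)), ρ i

/-- `|𝛒_{j-1}| = ρ_1 + ⋯ + ρ_{j-1}` (1-based `j`). -/
noncomputable def sumLtρ (d : ℕ) (ρ : Fin d → ℝ) (j : Fin d) : ℝ :=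
  ∑ i ∈ Finset.univ.filter (fun i : Fin d => (i : ℕ) < (j : ℕ)), ρ i

/-- Krawtchouk polynomial of `d` variables `K_ν(x; ρ, N)`. -/
noncomputable def krawH (d N : ℕ) (ρ : Fin d → ℝ) (ν : Fin d → ℕ)
    (x : Fin (d + 1) → ℕ) : ℝ :=
  (-1 : ℝ) ^ (∑ i, ν i) / poch (-(N : ℝ)) (∑ i, ν i) *
    ∏ j : Fin d,
      ρ j ^ ν j / (1 - sumLe d ρ j) ^ ν j *
        poch (-(N : ℝ) + sumLt d x j + sumGt d ν j) (ν j) *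
        kraw1 (ν j) (x j.castSucc : ℝ) (ρ j / (1 - sumLtρ d ρ j))
          ((N : ℝ) - sumLt d x j - sumGt d ν j)

/-- Squared norm `C_ν(ρ, N)` of the Krawtchouk polynomial `K_ν(·; ρ, N)`. -/
noncomputable def Cnorm (d N : ℕ) (ρ : Fin d → ℝ) (ν : Fin d → ℕ) : ℝ :=
  (-1 : ℝ) ^ (∑ i, ν i) / (poch (-(N : ℝ)) (∑ i, ν i) * (Nat.factorial N : ℝ)) *
    ∏ j : Fin d,
      (Nat.factorial (ν j) : ℝ) * ρ j ^ ν j /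
        (1 - sumLe d ρ j) ^ ((ν j : ℤ) - ((Fin.snoc ν 0 : Fin (d + 1) → ℕ) j.succ : ℤ))

/-- Monic Krawtchouk polynomial `L_α(x; ρ, N)`. -/
noncomputable def monicL (d N : ℕ) (ρ : Fin d → ℝ) (α : Fin (d + 1) → ℕ)
    (x : Fin (d + 1) → ℝ) : ℝ :=
  poch (-(N : ℝ)) (∑ i, α i) * bpow d ρ α *
    ∑ γ ∈ below α,
      pochV (fun i => -(α i : ℝ)) γ * (-1 : ℝ) ^ (∑ i, γ i) /
          (mfact γ * poch (-(N : ℝ)) (∑ i, γ i) * bpow d ρ γ) *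
        mono γ x

/-- Projection `L_{α,n}(x; ρ, N)` of `m_α/𝛒^α` onto the space of degree `n`. -/
noncomputable def monicLn (d N : ℕ) (ρ : Fin d → ℝ) (α : Fin (d + 1) → ℕ) (n : ℕ)
    (x : Fin (d + 1) → ℝ) : ℝ :=
  (-1 : ℝ) ^ (∑ i, α i) * poch (-(N : ℝ)) (∑ i, α i) / poch (-(N : ℝ)) n *
    ∑ β ∈ ZN d n,
      pochV (fun i => -(α i : ℝ)) β / (mfact β * bpow d ρ β) * monicL d N ρ β x

/-- The kernel `F_k(x, y; ρ) = Σ_{|γ|=k} (-x)_γ (-y)_γ / (γ! 𝛒^γ)`. -/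
noncomputable def Ffun (d : ℕ) (ρ : Fin d → ℝ) (x y : Fin (d + 1) → ℕ) (k : ℕ) : ℝ :=
  ∑ γ ∈ ZN d k,
    pochV (fun i => -(x i : ℝ)) γ * pochV (fun i => -(y i : ℝ)) γ / (mfact γ * bpow d ρ γ)

lemma poch_neg_nat (a : ℕ) : ∀ k : ℕ, poch (-(a : ℝ)) k = (-1) ^ k * (a.descFactorial k : ℝ)
  | 0 => by simp [poch]
  | k + 1 => by
    rw [poch, poch_neg_nat a k, Nat.descFactorial_succ]
    rcases lt_or_ge k a with h | h
    · have : ((a - k : ℕ) : ℝ) = (a : ℝ) - k := by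
        push_cast [Nat.cast_sub h.le]; ring
      rw [Nat.cast_mul, this]; ring
    · rcases h.lt_or_eq with h | h
      · rw [Nat.descFactorial_of_lt h]; push_cast; ring
      · subst h; push_cast [Nat.sub_self]; ring

lemma poch_pos {a : ℝ} (h : 0 < a) : ∀ k, 0 < poch a k
  | 0 => by simp [poch]
  | k + 1 => by
    rw [poch]; exact mul_pos (poch_pos h k) (by positivity)

lemma poch_neg_nat_ne_zero {k N : ℕ} (h : k ≤ N) : poch (-(N : ℝ)) k ≠ 0 := by
  rw [poch_neg_nat]
  have h1 : N.descFactorial k ≠ 0 := by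
    simpa [Nat.descFactorial_eq_zero_iff_lt, Nat.not_lt] using h
  have h2 : ((-1 : ℝ)) ^ k ≠ 0 := by
    simp
  exact mul_ne_zero h2 (by exact_mod_cast h1)

lemma mem_ZN {d M : ℕ} {α : Fin (d + 1) → ℕ} : α ∈ ZN d M ↔ ∑ i, α i = M := by
  constructor
  · intro h; exact (Finset.mem_filter.mp h).2
  · intro h
    refine Finset.mem_filter.mpr ⟨Fintype.mem_piFinset.mpr fun i => ?_, h⟩
    rw [Finset.mem_range, Nat.lt_succ_iff, ← h]
    exact Finset.single_le_sum (fun j _ => Nat.zero_le _) (Finset.mem_univ i)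

lemma mfact_pos {m : ℕ} (γ : Fin m → ℕ) : 0 < mfact γ := by
  apply Finset.prod_pos
  intro i _
  exact_mod_cast Nat.factorial_pos _

lemma multinom_expand (d M : ℕ) (y : Fin (d + 1) → ℝ) :
    (∑ i, y i) ^ M = ∑ α ∈ ZN d M, ((M.factorial : ℝ) / mfact α) * ∏ i, y i ^ α i := by
  have hZN : ZN d M = Finset.piAntidiag Finset.univ M := by
    ext α
    rw [mem_ZN, Finset.mem_piAntidiag]
    simp
  rw [hZN, Finset.sum_pow_eq_sum_piAntidiag]
  apply Finset.sum_congr rfl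
  intro α hα
  have hsum : ∑ i, α i = M := by
    simpa using (Finset.mem_piAntidiag.mp hα).1
  have hmul : (∏ i, Nat.factorial (α i)) * Nat.multinomial Finset.univ α = M.factorial := by
    rw [Nat.multinomial_spec, hsum]
  congr 1
  rw [eq_div_iff (mfact_pos α).ne', mfact]
  push_cast [← hmul]
  ring

lemma desc_fact_prod (a b : ℕ) : ((a + b).descFactorial b : ℝ) * (a.factorial : ℝ) =
    ((a + b).factorial : ℝ) := by
  have := Nat.factorial_mul_descFactorial (Nat.le_add_left b a)
  rw [Nat.add_sub_cancel] at this
  exact_mod_cast (Nat.mul_comm _ _).trans this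

lemma key_sum (d N : ℕ) (γ : Fin (d + 1) → ℕ) (hγ : ∑ i, γ i ≤ N) (y : Fin (d + 1) → ℝ) :
    ∑ α ∈ ZN d N, ((N.factorial : ℝ) / mfact α) * mono γ (fun i => (α i : ℝ)) * ∏ i, y i ^ α i
    = (-1 : ℝ) ^ (∑ i, γ i) * poch (-(N : ℝ)) (∑ i, γ i) * (∏ i, y i ^ γ i) *
        (∑ i, y i) ^ (N - ∑ i, γ i) := by
  have hmono : ∀ α : Fin (d + 1) → ℕ,
      mono γ (fun i => (α i : ℝ)) = ∏ i, ((α i).descFactorial (γ i) : ℝ) := by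
    intro α
    rw [mono, pochV,
      Finset.prod_congr rfl (fun i _ => poch_neg_nat (α i) (γ i)),
      Finset.prod_mul_distrib, Finset.prod_pow_eq_pow_sum, ← mul_assoc, ← pow_add, ← two_mul,
      pow_mul]
    norm_num
  have hsign : (-1 : ℝ) ^ (∑ i, γ i) * poch (-(N : ℝ)) (∑ i, γ i) =
      (N.descFactorial (∑ i, γ i) : ℝ) := by
    rw [poch_neg_nat, ← mul_assoc, ← pow_add, ← two_mul, pow_mul]
    norm_num
  rw [hsign]
  simp only [hmono]
  rw [multinom_expand d (N - ∑ i, γ i) y, Finset.mul_sum]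
  rw [← Finset.sum_subset (Finset.filter_subset (fun α => ∀ i, γ i ≤ α i) (ZN d N))
    (by
      intro α hα hnot
      have : ∃ i, α i < γ i := by
        by_contra hc
        push_neg at hc
        exact hnot (Finset.mem_filter.mpr ⟨hα, fun i => hc i⟩)
      obtain ⟨i, hi⟩ := this
      have : ((α i).descFactorial (γ i) : ℝ) = 0 := by
        rw [Nat.descFactorial_of_lt hi]; simp
      rw [Finset.prod_eq_zero (Finset.mem_univ i) this]
      ring)]
  refine Finset.sum_nbij' (fun α => fun j => α j - γ j) (fun δ => fun j => δ j + γ j) ?_ ?_ ?_ ?_ ?_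
  · intro α hα
    obtain ⟨hα1, hα2⟩ := Finset.mem_filter.mp hα
    rw [mem_ZN]
    beta_reduce
    have := mem_ZN.mp hα1
    have : ∑ j, (α j - γ j) = ∑ j, α j - ∑ j, γ j := by
      rw [Finset.sum_tsub_distrib]
      intro i _
      exact hα2 i
    omega
  · intro δ hδ
    have hδ1 := mem_ZN.mp hδ
    refine Finset.mem_filter.mpr ⟨mem_ZN.mpr ?_, fun i => Nat.le_add_left _ _⟩
    beta_reduce
    rw [Finset.sum_add_distrib, hδ1]
    omega
  · intro α hα
    obtain ⟨_, hα2⟩ := Finset.mem_filter.mp hα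
    funext j
    show α j - γ j + γ j = α j
    exact Nat.sub_add_cancel (hα2 j)
  · intro δ _
    funext j
    show δ j + γ j - γ j = δ j
    omega
  · intro α hα
    obtain ⟨hα1, hα2⟩ := Finset.mem_filter.mp hα
    have hprod : (∏ i, ((α i).descFactorial (γ i) : ℝ)) * mfact (fun j => α j - γ j) =
        mfact α := by
      rw [mfact, mfact, ← Finset.prod_mul_distrib]
      apply Finset.prod_congr rfl
      intro i _
      have := desc_fact_prod (α i - γ i) (γ i)
      rw [Nat.sub_add_cancel (hα2 i)] at this
      exact this
    have hy : ∏ i, y i ^ α i = (∏ i, y i ^ γ i) * ∏ i, y i ^ (α i - γ i) := by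
      rw [← Finset.prod_mul_distrib]
      apply Finset.prod_congr rfl
      intro i _
      rw [← pow_add]
      congr 1
      have := hα2 i
      omega
    have hNfact : (N.descFactorial (∑ i, γ i) : ℝ) * ((N - ∑ i, γ i).factorial : ℝ) =
        (N.factorial : ℝ) := by
      have := Nat.factorial_mul_descFactorial hγ
      exact_mod_cast (Nat.mul_comm _ _).trans this
    have hm1 : mfact α ≠ 0 := (mfact_pos α).ne'
    have hm2 : mfact (fun j => α j - γ j) ≠ 0 := (mfact_pos _).ne'
    have hP : (∏ i, ((α i).descFactorial (γ i) : ℝ)) =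
        mfact α / mfact (fun j => α j - γ j) := by
      rw [eq_div_iff hm2]; exact hprod
    beta_reduce
    rw [hy, hP, ← hNfact]
    field_simp

lemma mem_below {m : ℕ} {α γ : Fin m → ℕ} : γ ∈ below α ↔ ∀ i, γ i ≤ α i := by
  simp [below, Nat.lt_succ_iff]

lemma coeff_helper (sg sp f Kb P X S Kg m e q p Yg : ℝ)
    (hsp : sp ≠ 0) (hq : q ≠ 0) (hp : p ≠ 0) (hm : m ≠ 0) (hKg : Kg ≠ 0) (hP : P ≠ 0)
    (he : e = 1 ∨ e = -1) :
    sg * sp * (f * Kb / P * (X * S / (Kg * m) * (Yg / sp))) =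
      f / q * (q * Kb / P * (X * S * e / (m * Kg * p)) * (e * p * Yg * sg)) := by
  rcases he with rfl | rfl <;> field_simp <;> ring

/-- `R_β^κ` is a generating function for the monic Hahn polynomials. -/
theorem jacobiR_generating_monicHahn (d N : ℕ) (hd : 1 ≤ d) (κ : Fin (d + 1) → ℝ)
    (hκ : ∀ i, -1 < κ i) (β : Fin (d + 1) → ℕ) (hβ : ∑ i, β i ≤ N)
    (y : Fin (d + 1) → ℝ) (hs : ∑ i, y i ≠ 0) :
    (∑ i, y i) ^ N * jacobiR d κ β (fun j : Fin d => y j.castSucc / ∑ i, y i) =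
      (-1 : ℝ) ^ (∑ i, β i) / poch (-(N : ℝ)) (∑ i, β i) *
        ∑ α ∈ ZN d N,
          (Nat.factorial N : ℝ) / mfact α * monicQ d N κ β (fun i => (α i : ℝ)) *
            ∏ i, y i ^ α i := by
  have hgB : ∀ γ ∈ below β, ∑ i, γ i ≤ ∑ i, β i := by
    intro γ hγ
    exact Finset.sum_le_sum fun i _ => mem_below.mp hγ i
  have hX : ∀ i, (Fin.snoc (fun j : Fin d => y j.castSucc / ∑ i, y i)
      (1 - ∑ j : Fin d, y j.castSucc / ∑ i, y i) : Fin (d + 1) → ℝ) i = y i / ∑ i, y i := by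
    intro i
    induction i using Fin.lastCases with
    | last =>
      rw [Fin.snoc_last]
      have hsum : (∑ i, y i) = ∑ j : Fin d, y j.castSucc + y (Fin.last d) :=
        Fin.sum_univ_castSucc y
      rw [← Finset.sum_div, eq_div_iff hs, sub_mul, div_mul_cancel₀ _ hs]
      linarith [hsum]
    | cast j => rw [Fin.snoc_castSucc]
  have hXprod : ∀ γ : Fin (d + 1) → ℕ,
      (∏ i, (Fin.snoc (fun j : Fin d => y j.castSucc / ∑ i, y i)
        (1 - ∑ j : Fin d, y j.castSucc / ∑ i, y i) : Fin (d + 1) → ℝ) i ^ γ i) =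
      (∏ i, y i ^ γ i) / (∑ i, y i) ^ (∑ i, γ i) := by
    intro γ
    rw [Finset.prod_congr rfl (fun i _ => by rw [hX i, div_pow]),
      Finset.prod_div_distrib, Finset.prod_pow_eq_pow_sum]
  -- nonzero facts
  have hP : poch ((∑ i, κ i) + d + (∑ i, β i)) (∑ i, β i) ≠ 0 := by
    rcases Nat.eq_zero_or_pos (∑ i, β i) with h | h
    · rw [h]; simp [poch]
    · refine (poch_pos ?_ _).ne'
      have : -(d : ℝ) - 1 < ∑ i, κ i := by
        have := Finset.sum_lt_sum_of_nonempty (Finset.univ_nonempty) (fun i _ => hκ i)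
        simp at this
        push_cast
        linarith
      have h1 : (1 : ℝ) ≤ (∑ i, β i : ℕ) := by exact_mod_cast h
      linarith
  have hKb : pochV (fun i => κ i + 1) β ≠ 0 := by
    refine (Finset.prod_pos fun i _ => poch_pos ?_ _).ne'
    linarith [hκ i]
  have hKg : ∀ γ : Fin (d + 1) → ℕ, pochV (fun i => κ i + 1) γ ≠ 0 := by
    intro γ
    refine (Finset.prod_pos fun i _ => poch_pos ?_ _).ne'
    linarith [hκ i]
  have hqB : poch (-(N : ℝ)) (∑ i, β i) ≠ 0 := poch_neg_nat_ne_zero hβ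
  simp only [jacobiR, monicQ]
  -- LHS
  rw [Finset.mul_sum, Finset.mul_sum]
  -- RHS inner reshape
  have h1 : ∀ α ∈ ZN d N,
      (N.factorial : ℝ) / mfact α *
          (poch (-(N : ℝ)) (∑ i, β i) * pochV (fun i => κ i + 1) β /
              poch ((∑ i, κ i) + d + (∑ i, β i)) (∑ i, β i) *
            ∑ γ ∈ below β,
              pochV (fun i => -(β i : ℝ)) γ *
                    poch ((∑ i, κ i) + d + (∑ i, β i)) (∑ i, γ i) * (-1 : ℝ) ^ (∑ i, γ i) /
                  (mfact γ * pochV (fun i => κ i + 1) γ * poch (-(N : ℝ)) (∑ i, γ i)) *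
                mono γ fun i => (α i : ℝ)) *
          ∏ i, y i ^ α i =
        ∑ γ ∈ below β,
          (poch (-(N : ℝ)) (∑ i, β i) * pochV (fun i => κ i + 1) β /
              poch ((∑ i, κ i) + d + (∑ i, β i)) (∑ i, β i) *
            (pochV (fun i => -(β i : ℝ)) γ *
                  poch ((∑ i, κ i) + d + (∑ i, β i)) (∑ i, γ i) * (-1 : ℝ) ^ (∑ i, γ i) /
                (mfact γ * pochV (fun i => κ i + 1) γ * poch (-(N : ℝ)) (∑ i, γ i)))) *
          ((N.factorial : ℝ) / mfact α * (mono γ fun i => (α i : ℝ)) * ∏ i, y i ^ α i) := by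
    intro α _
    simp only [Finset.mul_sum, Finset.sum_mul]
    exact Finset.sum_congr rfl fun γ _ => by ring
  rw [Finset.sum_congr rfl h1, Finset.sum_comm, Finset.mul_sum]
  refine Finset.sum_congr rfl fun γ hγ => ?_
  have hg := mem_below.mp hγ
  have hgN : ∑ i, γ i ≤ N := le_trans (hgB γ hγ) hβ
  have hqg : poch (-(N : ℝ)) (∑ i, γ i) ≠ 0 := poch_neg_nat_ne_zero hgN
  rw [← Finset.mul_sum, key_sum d N γ hgN y]
  rw [hXprod γ]
  have hpow : (∑ i, y i) ^ N = (∑ i, y i) ^ (N - ∑ i, γ i) * (∑ i, y i) ^ (∑ i, γ i) := by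
    rw [← pow_add, Nat.sub_add_cancel hgN]
  rw [hpow]
  have he : (-1 : ℝ) ^ (∑ i, γ i) = 1 ∨ (-1 : ℝ) ^ (∑ i, γ i) = -1 := by
    rcases Nat.even_or_odd (∑ i, γ i) with h | h
    · exact Or.inl h.neg_one_pow
    · exact Or.inr h.neg_one_pow
  have hm : mfact γ ≠ 0 := (mfact_pos γ).ne'
  exact coeff_helper _ _ _ _ _ _ _ _ _ _ _ _ _ (pow_ne_zero _ hs) hqB hqg hm (hKg γ) hP he
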